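/- For every r ∈ [1,∞], every c > 0 and dimension d ≥ 1 there is a constant C = C(d,r,c) > 0 such that for all σ > 0, the Gaussian function φ_σ(y) := exp(−c|y|²/σ²) satisfies |||φ_σ|||*_r = Σ_{z ∈ ℤ^d} ‖φ_σ·1_{D_z}‖_{L^r(ℝ^d)} ≤ C (σ^d + σ^{d/r}), with the convention d/∞ := 0. -/

import Mathlib

open MeasureTheory ENNReal Real

noncomputable section

/-- The half-open unit cube centered at the lattice point `z`. -/
def unitCube (d : ℕ) (z : Fin d → ℤ) : Set (EuclideanSpace ℝ (Fin d)) :=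
  {x | ∀ i, (z i : ℝ) - 1/2 ≤ x i ∧ x i < (z i : ℝ) + 1/2}

/-- The localized norm `|||f|||*_p := Σ_{z ∈ ℤ^d} ‖f·1_{D_z}‖_{L^p}`. -/
def locNormStar (d : ℕ) (p : ℝ≥0∞) (f : EuclideanSpace ℝ (Fin d) → ℝ) : ℝ≥0∞ :=
  ∑' z : Fin d → ℤ, eLpNorm ((unitCube d z).indicator f) p volume



lemma exp_neg_sq_le (v : ℝ) (hv : 0 ≤ v) : rexp (-(v^2)) ≤ 4 / (1+v)^2 := by
  have h2 : (1:ℝ) + v^2 ≤ rexp (v^2) := by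
    have := Real.add_one_le_exp (v^2); linarith
  have h1 : (1+v)^2 ≤ 4 * rexp (v^2) := by nlinarith [sq_nonneg (1-v)]
  have hpos : (0:ℝ) < (1+v)^2 := by positivity
  rw [Real.exp_neg, inv_eq_one_div, div_le_div_iff₀ (Real.exp_pos _) hpos]
  linarith

lemma tsum_inv_sq_le (s : ℝ) (hs : 0 < s) :
    ∑' k : ℕ, ENNReal.ofReal (1/(s+k)^2) ≤ ENNReal.ofReal (1/s^2 + 1/s) := by
  rw [ENNReal.tsum_eq_iSup_sum]
  apply iSup_le
  intro F
  obtain ⟨N, hFN⟩ := F.exists_nat_subset_range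
  calc ∑ k ∈ F, ENNReal.ofReal (1/(s+k)^2)
      ≤ ∑ k ∈ Finset.range N, ENNReal.ofReal (1/(s+k)^2) :=
        Finset.sum_le_sum_of_subset hFN
    _ = ENNReal.ofReal (∑ k ∈ Finset.range N, 1/(s+k)^2) := by
        rw [ENNReal.ofReal_sum_of_nonneg]; intro i _; positivity
    _ ≤ ENNReal.ofReal (1/s^2 + 1/s) := by
        apply ENNReal.ofReal_le_ofReal
        rcases N with _ | M
        · simp; positivity
        · rw [Finset.sum_range_succ']
          set f : ℕ → ℝ := fun j => 1/(s+(j:ℝ)) with hf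
          have tel : ∑ j ∈ Finset.range M, (f j - f (j+1)) = f 0 - f M :=
            Finset.sum_range_sub' f M
          have key : ∑ j ∈ Finset.range M, 1/(s+((j+1:ℕ):ℝ))^2 ≤ 1/s := by
            have h1 : ∀ j ∈ Finset.range M, 1/(s+((j+1:ℕ):ℝ))^2 ≤ f j - f (j+1) := by
              intro j _
              have hj : (0:ℝ) ≤ (j:ℝ) := Nat.cast_nonneg j
              have h2 : f j - f (j+1) = 1/((s+j)*(s+(j+1))) := by
                simp only [hf]; push_cast; field_simp; ring
              rw [h2]
              push_cast
              apply one_div_le_one_div_of_le (by positivity)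
              nlinarith
            calc ∑ j ∈ Finset.range M, 1/(s+((j+1:ℕ):ℝ))^2
                ≤ ∑ j ∈ Finset.range M, (f j - f (j+1)) := Finset.sum_le_sum h1
              _ = f 0 - f M := tel
              _ ≤ 1/s := by
                  simp only [hf, Nat.cast_zero, add_zero]
                  have : 0 ≤ 1/(s+(M:ℝ)) := by positivity
                  linarith
          have e0 : 1/(s+((0:ℕ):ℝ))^2 = 1/s^2 := by norm_num
          rw [e0]
          linarith [key]




lemma nat_gauss_sum (c' σ : ℝ) (hc' : 0 < c') (hσ : 0 < σ) :
    ∑' k : ℕ, ENNReal.ofReal (rexp (-(c' * ((k:ℝ)+1/2)^2) / σ^2))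
      ≤ ENNReal.ofReal (4 + 4 * (σ / Real.sqrt c')) := by
  set s : ℝ := σ / Real.sqrt c' with hs
  have hsc : 0 < Real.sqrt c' := Real.sqrt_pos.2 hc'
  have hs0 : 0 < s := by positivity
  have hterm : ∀ k : ℕ, rexp (-(c' * ((k:ℝ)+1/2)^2) / σ^2) ≤ 4*s^2 * (1/(s+k)^2) := by
    intro k
    have hk : (0:ℝ) ≤ (k:ℝ) := Nat.cast_nonneg k
    have hsk : (0:ℝ) < s + k := by positivity
    have hsq : (((k:ℝ)/s))^2 = c' * (k:ℝ)^2 / σ^2 := by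
      rw [hs, div_pow, div_pow, Real.sq_sqrt hc'.le]
      field_simp
    have hmono : c' * (k:ℝ)^2 / σ^2 ≤ c' * ((k:ℝ)+1/2)^2 / σ^2 := by
      gcongr
      nlinarith
    have h1 : rexp (-(c' * ((k:ℝ)+1/2)^2) / σ^2) ≤ rexp (-(((k:ℝ)/s)^2)) := by
      apply Real.exp_le_exp.2
      rw [hsq]
      simp only [neg_div]
      exact neg_le_neg hmono
    have h3 := exp_neg_sq_le ((k:ℝ)/s) (by positivity)
    have h4 : 4/(1+(k:ℝ)/s)^2 = 4*s^2*(1/(s+k)^2) := by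
      field_simp
    rw [h4] at h3
    linarith
  calc ∑' k : ℕ, ENNReal.ofReal (rexp (-(c' * ((k:ℝ)+1/2)^2) / σ^2))
      ≤ ∑' k : ℕ, ENNReal.ofReal (4*s^2 * (1/(s+k)^2)) :=
        ENNReal.tsum_le_tsum (fun k => ENNReal.ofReal_le_ofReal (hterm k))
    _ = ∑' k : ℕ, ENNReal.ofReal (4*s^2) * ENNReal.ofReal (1/(s+k)^2) := by
        congr 1; funext k; rw [ENNReal.ofReal_mul (by positivity)]
    _ = ENNReal.ofReal (4*s^2) * ∑' k : ℕ, ENNReal.ofReal (1/(s+k)^2) :=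
        ENNReal.tsum_mul_left
    _ ≤ ENNReal.ofReal (4*s^2) * ENNReal.ofReal (1/s^2 + 1/s) := by
        gcongr
        exact tsum_inv_sq_le s hs0
    _ = ENNReal.ofReal (4*s^2 * (1/s^2 + 1/s)) := (ENNReal.ofReal_mul (by positivity)).symm
    _ = ENNReal.ofReal (4 + 4*s) := by
        congr 1
        field_simp

def bfun (n : ℤ) : ℝ := if n = 0 then 0 else |(n:ℝ)| - 1/2

lemma bfun_nonneg (n : ℤ) : 0 ≤ bfun n := by
  unfold bfun
  split
  · exact le_rfl
  · rename_i h
    have h1 : (1:ℤ) ≤ |n| := Int.one_le_abs h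
    have h2 : (1:ℝ) ≤ |(n:ℝ)| := by rw [← Int.cast_abs]; exact_mod_cast h1
    linarith

lemma bfun_succ (n : ℕ) : bfun ((n:ℤ)+1) = (n:ℝ) + 1/2 := by
  unfold bfun
  rw [if_neg (by omega)]
  push_cast
  rw [abs_of_nonneg (by positivity)]
  ring

lemma bfun_neg (n : ℤ) : bfun (-n) = bfun n := by
  unfold bfun
  simp [neg_eq_zero, abs_neg]

lemma int_gauss_sum (c' σ : ℝ) (hc' : 0 < c') (hσ : 0 < σ) :
    ∑' n : ℤ, ENNReal.ofReal (rexp (-(c' * (bfun n)^2) / σ^2))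
      ≤ ENNReal.ofReal ((9 + 8 / Real.sqrt c') * (1 + σ)) := by
  set f : ℤ → ℝ≥0∞ := fun n => ENNReal.ofReal (rexp (-(c' * (bfun n)^2) / σ^2)) with hf
  have hsplit : ∑' n : ℕ, (f n + f (-(n+1))) = ∑' n : ℤ, f n :=
    tsum_nat_add_neg_add_one ENNReal.summable
  have hneg : ∀ n : ℕ, f (-((n:ℤ)+1)) = ENNReal.ofReal (rexp (-(c' * ((n:ℝ)+1/2)^2) / σ^2)) := by
    intro n
    rw [hf]
    simp only [bfun_neg, bfun_succ]
  have hposbound : ∑' n : ℕ, f ((n:ℤ)+1) ≤ ENNReal.ofReal (4 + 4 * (σ / Real.sqrt c')) := by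
    calc ∑' n : ℕ, f ((n:ℤ)+1)
        = ∑' n : ℕ, ENNReal.ofReal (rexp (-(c' * ((n:ℝ)+1/2)^2) / σ^2)) := by
          congr 1; funext n; rw [hf]; simp only [bfun_succ]
      _ ≤ _ := nat_gauss_sum c' σ hc' hσ
  have hnegbound : ∑' n : ℕ, f (-((n:ℤ)+1)) ≤ ENNReal.ofReal (4 + 4 * (σ / Real.sqrt c')) := by
    calc ∑' n : ℕ, f (-((n:ℤ)+1))
        = ∑' n : ℕ, ENNReal.ofReal (rexp (-(c' * ((n:ℝ)+1/2)^2) / σ^2)) := by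
          congr 1; funext n; exact hneg n
      _ ≤ _ := nat_gauss_sum c' σ hc' hσ
  have hzero : f 0 = ENNReal.ofReal 1 := by
    rw [hf]; simp [bfun]
  have hnat : ∑' n : ℕ, f n ≤ ENNReal.ofReal 1 + ENNReal.ofReal (4 + 4 * (σ / Real.sqrt c')) := by
    have h0 : ∑' n : ℕ, f n = f ((0:ℕ):ℤ) + ∑' n : ℕ, f (((n+1:ℕ)):ℤ) :=
      tsum_eq_zero_add' ENNReal.summable
    rw [h0]
    gcongr
    · rw [Nat.cast_zero, hzero]
    · calc ∑' n : ℕ, f ((n+1:ℕ):ℤ) = ∑' n : ℕ, f ((n:ℤ)+1) := by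
            simp only [Nat.cast_add, Nat.cast_one]
        _ ≤ _ := hposbound
  calc ∑' n : ℤ, f n = ∑' n : ℕ, (f n + f (-(n+1))) := hsplit.symm
    _ = (∑' n : ℕ, f n) + ∑' n : ℕ, f (-((n:ℤ)+1)) := ENNReal.tsum_add
    _ ≤ (ENNReal.ofReal 1 + ENNReal.ofReal (4 + 4 * (σ / Real.sqrt c')))
        + ENNReal.ofReal (4 + 4 * (σ / Real.sqrt c')) := by gcongr
    _ = ENNReal.ofReal (1 + (4 + 4 * (σ / Real.sqrt c')) + (4 + 4 * (σ / Real.sqrt c'))) := by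
        have hsc : 0 < Real.sqrt c' := Real.sqrt_pos.2 hc'
        rw [← ENNReal.ofReal_add (by norm_num) (by positivity),
          ← ENNReal.ofReal_add (by positivity) (by positivity)]
    _ ≤ ENNReal.ofReal ((9 + 8 / Real.sqrt c') * (1 + σ)) := by
        apply ENNReal.ofReal_le_ofReal
        have hsc : 0 < Real.sqrt c' := Real.sqrt_pos.2 hc'
        have h1 : 0 < 1/Real.sqrt c' := by positivity
        have hexp : (9 + 8/Real.sqrt c')*(1+σ)
            = 9 + 9*σ + 8/Real.sqrt c' + 8*(σ/Real.sqrt c') := by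
          field_simp; ring
        have h3 : 0 < 8 / Real.sqrt c' := by positivity
        rw [hexp]
        linarith





lemma tsum_pi_prod (d : ℕ) (f : ℤ → ℝ≥0∞) :
    ∑' z : Fin d → ℤ, ∏ i, f (z i) = (∑' n : ℤ, f n) ^ d := by
  induction d with
  | zero =>
    simp only [Finset.univ_eq_empty, Finset.prod_empty, pow_zero]
    rw [tsum_eq_single (fun i => i.elim0)]
    intro b hb
    exact absurd (Subsingleton.elim b _) hb
  | succ d ih =>
    have he := (Fin.consEquiv (fun _ : Fin (d+1) => ℤ)).tsum_eq (fun z : Fin (d+1) → ℤ => ∏ i, f (z i))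
    rw [← he]
    have hval : ∀ p : ℤ × (Fin d → ℤ),
        (∏ i, f (((Fin.consEquiv (fun _ : Fin (d+1) => ℤ)) p) i)) = f p.1 * ∏ i : Fin d, f (p.2 i) := by
      intro p
      rw [Fin.prod_univ_succ]
      simp [Fin.consEquiv]
    calc ∑' p : ℤ × (Fin d → ℤ), ∏ i, f (((Fin.consEquiv (fun _ : Fin (d+1) => ℤ)) p) i)
        = ∑' p : ℤ × (Fin d → ℤ), f p.1 * ∏ i : Fin d, f (p.2 i) := by
          congr 1; funext p; exact hval p
      _ = ∑' n : ℤ, ∑' w : Fin d → ℤ, f n * ∏ i : Fin d, f (w i) := ENNReal.tsum_prod'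
      _ = ∑' n : ℤ, f n * ∑' w : Fin d → ℤ, ∏ i : Fin d, f (w i) := by
          congr 1; funext n; exact ENNReal.tsum_mul_left
      _ = (∑' n : ℤ, f n) * ∑' w : Fin d → ℤ, ∏ i : Fin d, f (w i) := ENNReal.tsum_mul_right
      _ = (∑' n : ℤ, f n) ^ (d+1) := by rw [ih, pow_succ]; ring

lemma volume_unitCube (d : ℕ) (z : Fin d → ℤ) : volume (unitCube d z) = 1 := by
  have hset : unitCube d z = ((MeasurableEquiv.toLp 2 (Fin d → ℝ)).symm) ⁻¹'
      (Set.univ.pi fun i => Set.Ico ((z i : ℝ) - 1/2) ((z i : ℝ) + 1/2)) := by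
    ext x
    simp [unitCube, Set.mem_pi, Set.mem_Ico]
  rw [hset, (EuclideanSpace.volume_preserving_symm_measurableEquiv_toLp (Fin d)).measure_preimage
    ((MeasurableSet.univ_pi fun i => measurableSet_Ico).nullMeasurableSet)]
  rw [volume_pi_pi]
  simp [Real.volume_Ico]
  norm_num

lemma sq_le_of_mem_interval (n : ℤ) (t : ℝ) (h1 : (n:ℝ) - 1/2 ≤ t) (h2 : t < (n:ℝ) + 1/2) :
    bfun n ^ 2 ≤ t ^ 2 := by
  rcases eq_or_ne n 0 with rfl | hn
  · simp [bfun]; positivity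
  · rcases lt_or_gt_of_ne hn with hneg | hpos
    · have hn1' : n ≤ -1 := by omega
      have hn1 : (n:ℝ) ≤ -1 := by exact_mod_cast hn1'
      have habs : |(n:ℝ)| = -(n:ℝ) := abs_of_neg (by linarith)
      have hb : bfun n = -(n:ℝ) - 1/2 := by rw [bfun, if_neg hn, habs]
      have hle : bfun n ≤ -t := by rw [hb]; linarith
      have hnn : 0 ≤ bfun n := bfun_nonneg n
      calc bfun n ^ 2 ≤ (-t) ^ 2 := by nlinarith
        _ = t ^ 2 := by ring
    · have hn1 : (1:ℝ) ≤ (n:ℝ) := by exact_mod_cast hpos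
      have habs : |(n:ℝ)| = (n:ℝ) := abs_of_pos (by linarith)
      have hb : bfun n = (n:ℝ) - 1/2 := by rw [bfun, if_neg hn, habs]
      have hle : bfun n ≤ t := by rw [hb]; linarith
      have hnn : 0 ≤ bfun n := bfun_nonneg n
      nlinarith

lemma sum_bfun_sq_le (d : ℕ) (z : Fin d → ℤ) (y : EuclideanSpace ℝ (Fin d))
    (hy : y ∈ unitCube d z) : ∑ i, bfun (z i) ^ 2 ≤ ‖y‖ ^ 2 := by
  have hnorm : ‖y‖ ^ 2 = ∑ i, (y i) ^ 2 := by
    rw [EuclideanSpace.norm_eq]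
    rw [Real.sq_sqrt (Finset.sum_nonneg fun i _ => by positivity)]
    congr 1; funext i; rw [Real.norm_eq_abs, sq_abs]
  rw [hnorm]
  apply Finset.sum_le_sum
  intro i _
  exact sq_le_of_mem_interval (z i) (y i) (hy i).1 (hy i).2


lemma gauss_integrable (d : ℕ) (B : ℝ) (hB : 0 < B) :
    Integrable (fun y : EuclideanSpace ℝ (Fin d) => rexp (-B * ‖y‖^2)) volume := by
  have h := (GaussianFourier.integrable_cexp_neg_mul_sq_norm_add
    (V := EuclideanSpace ℝ (Fin d)) (b := (B:ℂ)) (by simpa using hB) 0 0).re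
  have heq : (fun v : EuclideanSpace ℝ (Fin d) =>
      RCLike.re (Complex.exp (-(B:ℂ) * (‖v‖:ℂ)^2 + 0 * (inner ℝ (0 : EuclideanSpace ℝ (Fin d)) v : ℝ)))) =
      (fun y : EuclideanSpace ℝ (Fin d) => rexp (-B * ‖y‖^2)) := by
    funext v
    have : (-(B:ℂ) * (‖v‖:ℂ)^2 + 0 * ((inner ℝ (0 : EuclideanSpace ℝ (Fin d)) v : ℝ):ℂ))
        = ((-B * ‖v‖^2 : ℝ) : ℂ) := by push_cast; ring
    rw [this]
    exact Complex.exp_ofReal_re _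
  rwa [heq] at h

lemma gauss_eLpNorm_bound (d : ℕ) (r : ℝ≥0∞) (hr : 1 ≤ r) (b' : ℝ) (hb' : 0 < b') :
    ∃ K : ℝ, 0 < K ∧ ∀ σ : ℝ, 0 < σ →
      eLpNorm (fun y : EuclideanSpace ℝ (Fin d) => rexp (-(b' * ‖y‖^2) / σ^2)) r volume
        ≤ ENNReal.ofReal (K * σ ^ ((d:ℝ) / r.toReal)) := by
  have hr0 : r ≠ 0 := (zero_lt_one.trans_le hr).ne'
  rcases eq_or_ne r ⊤ with rfl | hrtop
  · refine ⟨1, zero_lt_one, fun σ hσ => ?_⟩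
    have hRHS : ENNReal.ofReal (1 * σ ^ ((d:ℝ) / (⊤:ℝ≥0∞).toReal)) = 1 := by
      simp [Real.rpow_zero]
    rw [hRHS, eLpNorm_exponent_top, eLpNormEssSup]
    refine essSup_le_of_ae_le _ ?_
    filter_upwards with y
    have h1 : rexp (-(b' * ‖y‖^2) / σ^2) ≤ 1 := by
      rw [Real.exp_le_one_iff]
      have : 0 ≤ b' * ‖y‖^2 := by positivity
      have h2 : 0 < σ^2 := by positivity
      rw [neg_div]
      simp only [Left.neg_nonpos_iff]
      positivity
    calc (‖rexp (-(b' * ‖y‖^2) / σ^2)‖₊ : ℝ≥0∞)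
        = ENNReal.ofReal (rexp (-(b' * ‖y‖^2) / σ^2)) :=
          Real.enorm_eq_ofReal (Real.exp_pos _).le
      _ ≤ ENNReal.ofReal 1 := ENNReal.ofReal_le_ofReal h1
      _ = 1 := ENNReal.ofReal_one
  · set p : ℝ := r.toReal with hp
    have hp0 : 0 < p := ENNReal.toReal_pos hr0 hrtop
    set K₀ : ℝ := (π / (b' * p)) ^ ((d:ℝ)/2) with hK₀
    have hπ : (0:ℝ) < π := Real.pi_pos
    have hK₀pos : 0 < K₀ := by rw [hK₀]; positivity
    refine ⟨K₀ ^ (1/p), by positivity, fun σ hσ => ?_⟩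
    set B : ℝ := b' * p / σ^2 with hB
    have hBpos : 0 < B := by rw [hB]; positivity
    have hnn : ∀ y : EuclideanSpace ℝ (Fin d),
        ‖rexp (-(b' * ‖y‖^2) / σ^2)‖ₑ ^ p = ENNReal.ofReal (rexp (-B * ‖y‖^2)) := by
      intro y
      rw [Real.enorm_eq_ofReal (Real.exp_pos _).le,
        ENNReal.ofReal_rpow_of_nonneg (Real.exp_pos _).le hp0.le]
      congr 1
      rw [← Real.exp_mul]
      congr 1
      rw [hB]
      field_simp
    have hlint : ∫⁻ y : EuclideanSpace ℝ (Fin d), ‖rexp (-(b' * ‖y‖^2) / σ^2)‖ₑ ^ p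
        = ENNReal.ofReal ((π / B) ^ ((d:ℝ)/2)) := by
      simp_rw [hnn]
      rw [← MeasureTheory.ofReal_integral_eq_lintegral_ofReal (gauss_integrable d B hBpos)
        (Filter.Eventually.of_forall fun y => (Real.exp_pos _).le)]
      congr 1
      have := GaussianFourier.integral_rexp_neg_mul_sq_norm (V := EuclideanSpace ℝ (Fin d)) hBpos
      rw [this, finrank_euclideanSpace_fin]
    have hsnorm : eLpNorm (fun y : EuclideanSpace ℝ (Fin d) => rexp (-(b' * ‖y‖^2) / σ^2)) r volume
        = ENNReal.ofReal ((π / B) ^ ((d:ℝ)/2)) ^ (1/p) := by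
      rw [eLpNorm_eq_lintegral_rpow_enorm_toReal hr0 hrtop, ← hp, hlint]
    rw [hsnorm, ENNReal.ofReal_rpow_of_nonneg (by positivity) (by positivity)]
    apply ENNReal.ofReal_le_ofReal
    have e1 : π / B = σ^(2:ℝ) * (π/(b'*p)) := by
      rw [hB, ← Real.rpow_natCast σ 2]
      push_cast
      field_simp
    have e2 : (π / B) ^ ((d:ℝ)/2) = σ^(d:ℝ) * K₀ := by
      rw [e1, Real.mul_rpow (by positivity) (by positivity), ← Real.rpow_mul hσ.le, hK₀]
      congr 2
      ring
    rw [e2, Real.mul_rpow (by positivity) hK₀pos.le, ← Real.rpow_mul hσ.le]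
    have e3 : (d:ℝ) * (1/p) = (d:ℝ)/p := by ring
    rw [e3, mul_comm]





/-- For every `r ∈ [1,∞]`, `c > 0` and `d ≥ 1` there is `C = C(d,r,c) > 0` such that for all
`σ > 0` the Gaussian `φ_σ(y) = exp(−c|y|²/σ²)` satisfies
`|||φ_σ|||*_r ≤ C (σ^d + σ^{d/r})` (with `d/∞ := 0`). -/
theorem locNormStar_gaussian_bound
    (d : ℕ) (hd : 1 ≤ d) (r : ℝ≥0∞) (hr : 1 ≤ r) (c : ℝ) (hc : 0 < c) :
    ∃ C : ℝ, 0 < C ∧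
      ∀ σ : ℝ, 0 < σ →
        locNormStar d r (fun y => Real.exp (-(c * ‖y‖ ^ 2) / σ ^ 2)) ≤
          ENNReal.ofReal (C * (σ ^ d + σ ^ ((d : ℝ) / r.toReal))) := by
  obtain ⟨K, hKpos, hKb⟩ := gauss_eLpNorm_bound d r hr (c/2) (half_pos hc)
  set A₁ : ℝ := 9 + 8 / Real.sqrt (c/2) with hA₁def
  set A₂ : ℝ := 9 + 8 / Real.sqrt c with hA₂def
  have hc2 : (0:ℝ) < c/2 := half_pos hc
  have hA₁ : 0 < A₁ := by
    have : 0 < Real.sqrt (c/2) := Real.sqrt_pos.2 hc2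
    rw [hA₁def]; positivity
  have hA₂ : 0 < A₂ := by
    have : 0 < Real.sqrt c := Real.sqrt_pos.2 hc
    rw [hA₂def]; positivity
  refine ⟨(2*A₁)^d * K + (2*A₂)^d, by positivity, fun σ hσ => ?_⟩
  set C : ℝ := (2*A₁)^d * K + (2*A₂)^d with hCdef
  have hrpow_nonneg : 0 ≤ σ ^ ((d:ℝ)/r.toReal) := Real.rpow_nonneg hσ.le _
  have hσd : (0:ℝ) ≤ σ^d := by positivity
  set Bz : (Fin d → ℤ) → ℝ := fun z => ∑ i, bfun (z i)^2 with hBzdef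
  have hBznn : ∀ z, 0 ≤ Bz z :=
    fun z => Finset.sum_nonneg fun i _ => sq_nonneg _
  rcases le_or_gt σ 1 with hσ1 | hσ1
  · -- small σ : use the Gaussian L^r bound
    have hψ := hKb σ hσ
    have hz : ∀ z : Fin d → ℤ,
        eLpNorm ((unitCube d z).indicator (fun y => rexp (-(c*‖y‖^2)/σ^2))) r volume
        ≤ ENNReal.ofReal (rexp (-(c/2 * Bz z)/σ^2)) *
          eLpNorm (fun y : EuclideanSpace ℝ (Fin d) => rexp (-(c/2 * ‖y‖^2)/σ^2)) r volume := by
      intro z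
      set m : ℝ := rexp (-(c/2 * Bz z)/σ^2) with hmdef
      have hm : 0 < m := Real.exp_pos _
      have hmono : ∀ y, ‖(unitCube d z).indicator (fun y => rexp (-(c*‖y‖^2)/σ^2)) y‖
          ≤ ‖(m • fun y : EuclideanSpace ℝ (Fin d) => rexp (-(c/2 * ‖y‖^2)/σ^2)) y‖ := by
        intro y
        have hRHS : (m • fun y : EuclideanSpace ℝ (Fin d) => rexp (-(c/2 * ‖y‖^2)/σ^2)) y
            = m * rexp (-(c/2 * ‖y‖^2)/σ^2) := rfl
        rw [hRHS, Real.norm_eq_abs, Real.norm_eq_abs, abs_of_pos (mul_pos hm (Real.exp_pos _))]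
        by_cases hy : y ∈ unitCube d z
        · rw [Set.indicator_of_mem hy]
          rw [abs_of_pos (Real.exp_pos _)]
          have hkey : rexp (-(c*‖y‖^2)/σ^2)
              = rexp (-(c/2 * ‖y‖^2)/σ^2) * rexp (-(c/2 * ‖y‖^2)/σ^2) := by
            rw [← Real.exp_add]; congr 1; ring
          have hle : rexp (-(c/2 * ‖y‖^2)/σ^2) ≤ m := by
            rw [hmdef]
            apply Real.exp_le_exp.2
            have hB : Bz z ≤ ‖y‖^2 := sum_bfun_sq_le d z y hy
            have h2 : c/2 * Bz z ≤ c/2 * ‖y‖^2 := by nlinarith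
            have h3 : 0 < σ^2 := by positivity
            rw [neg_div, neg_div, neg_le_neg_iff]
            gcongr
          rw [hkey]
          exact mul_le_mul_of_nonneg_right hle (Real.exp_pos _).le
        · rw [Set.indicator_of_notMem hy, abs_zero]
          exact (mul_pos hm (Real.exp_pos _)).le
      calc eLpNorm ((unitCube d z).indicator (fun y => rexp (-(c*‖y‖^2)/σ^2))) r volume
          ≤ eLpNorm (m • fun y : EuclideanSpace ℝ (Fin d) => rexp (-(c/2 * ‖y‖^2)/σ^2)) r volume :=
            eLpNorm_mono hmono
        _ = ‖m‖ₑ * eLpNorm (fun y : EuclideanSpace ℝ (Fin d) =>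
              rexp (-(c/2 * ‖y‖^2)/σ^2)) r volume := eLpNorm_const_smul m _ r volume
        _ = ENNReal.ofReal m * _ := by rw [Real.enorm_eq_ofReal hm.le]
    have hsum1 : ∑' z : Fin d → ℤ, ENNReal.ofReal (rexp (-(c/2 * Bz z)/σ^2))
        ≤ ENNReal.ofReal ((A₁*2)^d) := by
      have hfac : ∀ z : Fin d → ℤ, ENNReal.ofReal (rexp (-(c/2 * Bz z)/σ^2))
          = ∏ i, ENNReal.ofReal (rexp (-(c/2 * bfun (z i)^2)/σ^2)) := by
        intro z
        rw [← ENNReal.ofReal_prod_of_nonneg (fun i _ => (Real.exp_pos _).le), ← Real.exp_sum]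
        congr 1
        congr 1
        rw [hBzdef, Finset.mul_sum, neg_div, Finset.sum_div, ← Finset.sum_neg_distrib]
        exact Finset.sum_congr rfl fun i _ => (neg_div _ _).symm
      calc ∑' z : Fin d → ℤ, ENNReal.ofReal (rexp (-(c/2 * Bz z)/σ^2))
          = ∑' z : Fin d → ℤ, ∏ i, ENNReal.ofReal (rexp (-(c/2 * bfun (z i)^2)/σ^2)) := by
            congr 1; funext z; exact hfac z
        _ = (∑' n : ℤ, ENNReal.ofReal (rexp (-(c/2 * bfun n ^2)/σ^2))) ^ d :=
            tsum_pi_prod d (fun n => ENNReal.ofReal (rexp (-(c/2 * bfun n ^2)/σ^2)))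
        _ ≤ (ENNReal.ofReal (A₁ * (1+σ))) ^ d :=
            pow_le_pow_left' (int_gauss_sum (c/2) σ hc2 hσ) d
        _ ≤ (ENNReal.ofReal (A₁ * 2)) ^ d := by
            apply pow_le_pow_left'
            apply ENNReal.ofReal_le_ofReal
            nlinarith
        _ = ENNReal.ofReal ((A₁*2)^d) := by
            rw [ENNReal.ofReal_pow (by positivity)]
    calc locNormStar d r (fun y => Real.exp (-(c * ‖y‖ ^ 2) / σ ^ 2))
        = ∑' z : Fin d → ℤ,
          eLpNorm ((unitCube d z).indicator (fun y => rexp (-(c*‖y‖^2)/σ^2))) r volume := rfl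
      _ ≤ ∑' z : Fin d → ℤ, ENNReal.ofReal (rexp (-(c/2 * Bz z)/σ^2)) *
            eLpNorm (fun y : EuclideanSpace ℝ (Fin d) => rexp (-(c/2 * ‖y‖^2)/σ^2)) r volume :=
          ENNReal.tsum_le_tsum hz
      _ = (∑' z : Fin d → ℤ, ENNReal.ofReal (rexp (-(c/2 * Bz z)/σ^2))) *
            eLpNorm (fun y : EuclideanSpace ℝ (Fin d) => rexp (-(c/2 * ‖y‖^2)/σ^2)) r volume :=
          ENNReal.tsum_mul_right
      _ ≤ ENNReal.ofReal ((A₁*2)^d) * ENNReal.ofReal (K * σ ^ ((d:ℝ)/r.toReal)) := by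
          gcongr
      _ = ENNReal.ofReal ((A₁*2)^d * (K * σ ^ ((d:ℝ)/r.toReal))) :=
          (ENNReal.ofReal_mul (by positivity)).symm
      _ ≤ ENNReal.ofReal (C * (σ ^ d + σ ^ ((d : ℝ) / r.toReal))) := by
          apply ENNReal.ofReal_le_ofReal
          have h1 : (A₁*2)^d = (2*A₁)^d := by ring_nf
          have h2 : (0:ℝ) ≤ (2*A₂)^d := by positivity
          have h3 : (0:ℝ) ≤ (2*A₁)^d := by positivity
          rw [h1, hCdef]
          nlinarith [mul_nonneg h2 hrpow_nonneg, mul_nonneg (mul_nonneg h3 hKpos.le) hσd,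
            mul_nonneg h2 hσd]
  · -- large σ : use the sup bound on each cube
    have hz : ∀ z : Fin d → ℤ,
        eLpNorm ((unitCube d z).indicator (fun y => rexp (-(c*‖y‖^2)/σ^2))) r volume
        ≤ ENNReal.ofReal (rexp (-(c * Bz z)/σ^2)) := by
      intro z
      set M : ℝ := rexp (-(c * Bz z)/σ^2) with hMdef
      have hM : 0 < M := Real.exp_pos _
      have hmono : ∀ y, ‖(unitCube d z).indicator (fun y => rexp (-(c*‖y‖^2)/σ^2)) y‖
          ≤ ‖(unitCube d z).indicator (fun _ => M) y‖ := by
        intro y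
        by_cases hy : y ∈ unitCube d z
        · rw [Set.indicator_of_mem hy, Set.indicator_of_mem hy, Real.norm_eq_abs,
            Real.norm_eq_abs, abs_of_pos (Real.exp_pos _), abs_of_pos hM, hMdef]
          apply Real.exp_le_exp.2
          have hB : Bz z ≤ ‖y‖^2 := sum_bfun_sq_le d z y hy
          have h2 : c * Bz z ≤ c * ‖y‖^2 := by nlinarith
          have h3 : (0:ℝ) < σ^2 := by positivity
          rw [neg_div, neg_div, neg_le_neg_iff]
          gcongr
        · rw [Set.indicator_of_notMem hy, Set.indicator_of_notMem hy]
      calc eLpNorm ((unitCube d z).indicator (fun y => rexp (-(c*‖y‖^2)/σ^2))) r volume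
          ≤ eLpNorm ((unitCube d z).indicator (fun _ => M)) r volume := eLpNorm_mono hmono
        _ ≤ ‖M‖ₑ * volume (unitCube d z) ^ (1/r.toReal) :=
            eLpNorm_indicator_const_le M r
        _ = ENNReal.ofReal M := by
            rw [volume_unitCube, ENNReal.one_rpow, mul_one, Real.enorm_eq_ofReal hM.le]
    have hfac : ∀ z : Fin d → ℤ, ENNReal.ofReal (rexp (-(c * Bz z)/σ^2))
        = ∏ i, ENNReal.ofReal (rexp (-(c * bfun (z i)^2)/σ^2)) := by
      intro z
      rw [← ENNReal.ofReal_prod_of_nonneg (fun i _ => (Real.exp_pos _).le), ← Real.exp_sum]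
      congr 1
      congr 1
      rw [hBzdef, Finset.mul_sum, neg_div, Finset.sum_div, ← Finset.sum_neg_distrib]
      exact Finset.sum_congr rfl fun i _ => (neg_div _ _).symm
    calc locNormStar d r (fun y => Real.exp (-(c * ‖y‖ ^ 2) / σ ^ 2))
        = ∑' z : Fin d → ℤ,
          eLpNorm ((unitCube d z).indicator (fun y => rexp (-(c*‖y‖^2)/σ^2))) r volume := rfl
      _ ≤ ∑' z : Fin d → ℤ, ENNReal.ofReal (rexp (-(c * Bz z)/σ^2)) :=
          ENNReal.tsum_le_tsum hz
      _ = ∑' z : Fin d → ℤ, ∏ i, ENNReal.ofReal (rexp (-(c * bfun (z i)^2)/σ^2)) := by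
          congr 1; funext z; exact hfac z
      _ = (∑' n : ℤ, ENNReal.ofReal (rexp (-(c * bfun n ^2)/σ^2))) ^ d :=
          tsum_pi_prod d (fun n => ENNReal.ofReal (rexp (-(c * bfun n ^2)/σ^2)))
      _ ≤ (ENNReal.ofReal (A₂ * (1+σ))) ^ d := pow_le_pow_left' (int_gauss_sum c σ hc hσ) d
      _ ≤ (ENNReal.ofReal (A₂ * (2*σ))) ^ d := by
          apply pow_le_pow_left'
          apply ENNReal.ofReal_le_ofReal
          nlinarith
      _ = ENNReal.ofReal ((A₂ * (2*σ))^d) := by rw [ENNReal.ofReal_pow (by positivity)]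
      _ ≤ ENNReal.ofReal (C * (σ ^ d + σ ^ ((d : ℝ) / r.toReal))) := by
          apply ENNReal.ofReal_le_ofReal
          have h1 : (A₂*(2*σ))^d = (2*A₂)^d * σ^d := by rw [← mul_pow]; ring_nf
          have h2 : (0:ℝ) ≤ (2*A₂)^d := by positivity
          have h3 : (0:ℝ) ≤ (2*A₁)^d := by positivity
          rw [h1, hCdef]
          nlinarith [mul_nonneg h2 hrpow_nonneg, mul_nonneg (mul_nonneg h3 hKpos.le) hσd,
            mul_nonneg (mul_nonneg h3 hKpos.le) hrpow_nonneg]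
end
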